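/- Let A, B be nonempty compact convex subsets of ℝ^n such that the Hukuhara difference A ⊖ B exists. Then the Hausdorff distance between A and B equals ‖A ⊖ B‖, where ‖C‖ = sup_{c∈C} |c|. -/

import Mathlib

open scoped Pointwise Classical

def HukExists {n : ℕ} (A B : Set (EuclideanSpace ℝ (Fin n))) : Prop :=
  ∃ C : Set (EuclideanSpace ℝ (Fin n)), C.Nonempty ∧ IsCompact C ∧ Convex ℝ C ∧ A = B + C

noncomputable def huk {n : ℕ} (A B : Set (EuclideanSpace ℝ (Fin n))) :
    Set (EuclideanSpace ℝ (Fin n)) :=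
  if h : HukExists A B then h.choose else ∅

noncomputable def setNorm {n : ℕ} (A : Set (EuclideanSpace ℝ (Fin n))) : ℝ :=
  sSup ((fun a => ‖a‖) '' A)

theorem hausdorffDist_eq_setNorm_hukuhara {n : ℕ} (A B : Set (EuclideanSpace ℝ (Fin n)))
    (hA : A.Nonempty) (hAc : IsCompact A) (hAv : Convex ℝ A)
    (hB : B.Nonempty) (hBc : IsCompact B) (hBv : Convex ℝ B)
    (h : HukExists A B) :
    Metric.hausdorffDist A B = setNorm (huk A B) := by
  have hhuk : huk A B = h.choose := dif_pos h
  obtain ⟨hCne, hCc, hCv, hABC⟩ := h.choose_spec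
  set C := h.choose with hC
  rw [hhuk]
  -- maximum of norm on C
  obtain ⟨c0, hc0C, hc0max⟩ := hCc.exists_isMaxOn hCne continuous_norm.continuousOn
  have hsup : setNorm C = ‖c0‖ := by
    apply IsGreatest.csSup_eq
    constructor
    · exact ⟨c0, hc0C, rfl⟩
    · rintro x ⟨c, hc, rfl⟩
      exact hc0max hc
  rw [hsup]
  have hedist : EMetric.hausdorffEdist A B ≠ ⊤ :=
    Metric.hausdorffEdist_ne_top_of_nonempty_of_bounded hA hB hAc.isBounded hBc.isBounded
  apply le_antisymm
  · -- hausdorffDist ≤ ‖c0‖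
    apply Metric.hausdorffDist_le_of_infDist (norm_nonneg c0)
    · intro x hx
      rw [hABC] at hx
      obtain ⟨b, hb, c, hc, rfl⟩ := Set.mem_add.mp hx
      calc Metric.infDist (b + c) B ≤ dist (b + c) b := Metric.infDist_le_dist_of_mem hb
        _ = ‖c‖ := by rw [dist_eq_norm, add_sub_cancel_left]
        _ ≤ ‖c0‖ := hc0max hc
    · intro x hx
      have hxA : x + c0 ∈ A := by
        rw [hABC]; exact Set.add_mem_add hx hc0C
      calc Metric.infDist x A ≤ dist x (x + c0) := Metric.infDist_le_dist_of_mem hxA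
        _ = ‖c0‖ := by rw [dist_eq_norm]; simp
  · -- ‖c0‖ ≤ hausdorffDist
    rcases eq_or_ne c0 0 with h0 | h0
    · rw [h0, norm_zero]; exact Metric.hausdorffDist_nonneg
    · set u := ‖c0‖⁻¹ • c0 with hu
      have hc0pos : (0:ℝ) < ‖c0‖ := norm_pos_iff.mpr h0
      have hunorm : ‖u‖ = 1 := by
        rw [hu, norm_smul, norm_inv, norm_norm, inv_mul_cancel₀ hc0pos.ne']
      have huc0 : (inner ℝ u c0 : ℝ) = ‖c0‖ := by
        rw [hu, real_inner_smul_left, real_inner_self_eq_norm_sq]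
        field_simp
      obtain ⟨b0, hb0B, hb0max⟩ := hBc.exists_isMaxOn hB
        ((continuous_const.inner continuous_id).continuousOn :
          ContinuousOn (fun b => (inner ℝ u b : ℝ)) B)
      have ha0A : b0 + c0 ∈ A := by rw [hABC]; exact Set.add_mem_add hb0B hc0C
      have key : ‖c0‖ ≤ Metric.infDist (b0 + c0) B := by
        obtain ⟨b, hb, heq⟩ := hBc.exists_infDist_eq_dist hB (b0 + c0)
        rw [heq]
        have h1 : (inner ℝ u (b0 + c0 - b) : ℝ) ≤ dist (b0 + c0) b := by
          calc (inner ℝ u (b0 + c0 - b) : ℝ) ≤ ‖u‖ * ‖b0 + c0 - b‖ := real_inner_le_norm u _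
            _ = ‖b0 + c0 - b‖ := by rw [hunorm, one_mul]
            _ = dist (b0 + c0) b := (dist_eq_norm _ _).symm
        have h2 : ‖c0‖ ≤ (inner ℝ u (b0 + c0 - b) : ℝ) := by
          have hle : (inner ℝ u b : ℝ) ≤ inner ℝ u b0 := hb0max hb
          have expand : (inner ℝ u (b0 + c0 - b) : ℝ)
              = inner ℝ u b0 + inner ℝ u c0 - inner ℝ u b := by
            rw [inner_sub_right, inner_add_right]
          rw [expand, huc0]
          linarith
        linarith
      calc ‖c0‖ ≤ Metric.infDist (b0 + c0) B := key
        _ ≤ Metric.hausdorffDist A B := Metric.infDist_le_hausdorffDist_of_mem ha0A hedist
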